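/- Let G be a digraph on n vertices containing a directed path P = (p_1, p_2, …, p_m) (with an edge from p_i to p_{i+1} for each 1 ≤ i < m). Then there exists a set S of at most 2n(⌊log₂ m⌋ + 2) edges of TC(G) such that for every pair of vertices (u,v): if G contains a directed path from u to v that intersects P, then the digraph G ∪ S contains a directed path from u to v of length at most 2. -/

import Mathlib

/-- There is a directed walk of length at most `k` from `u` to `v` in the digraph
with edge relation `E`. -/
def distLE {V : Type*} (E : V → V → Prop) : ℕ → V → V → Prop
  | 0 => fun u v => u = v
  | n + 1 => fun u v => u = v ∨ ∃ w, E u w ∧ distLE E n w v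

/-- `H` is a `k`-transitive-closure-spanner of the digraph `E`: every edge of `H` is an
edge of the transitive closure of `E`, and whenever `E` has a directed path from `u` to `v`,
`H` has one of length at most `k`. -/
def IsTCSpanner {V : Type*} (E H : V → V → Prop) (k : ℕ) : Prop :=
  (∀ u v, H u v → u ≠ v ∧ Relation.TransGen E u v) ∧
  (∀ u v, Relation.ReflTransGen E u v → distLE H k u v)


/-- round up to a multiple of k -/
def rUp (a k : ℕ) : ℕ := k * ((a + k - 1) / k)
/-- round down to a multiple of k -/
def rDn (b k : ℕ) : ℕ := k * (b / k)

lemma rUp_spec (a k : ℕ) (hk : 0 < k) : a ≤ rUp a k ∧ rUp a k < a + k := by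
  have h1 := Nat.div_add_mod (a + k - 1) k
  have h2 : (a + k - 1) % k < k := Nat.mod_lt _ hk
  unfold rUp
  generalize hq : (a + k - 1) / k = q at h1 ⊢
  generalize hM : k * q = M at h1 ⊢
  omega

lemma rUp_dvd (a k : ℕ) : k ∣ rUp a k := ⟨_, rfl⟩
lemma rDn_dvd (b k : ℕ) : k ∣ rDn b k := ⟨_, rfl⟩

lemma rUp_min {a k d : ℕ} (hk : 0 < k) (hdvd : k ∣ d) (had : a ≤ d) : rUp a k ≤ d := by
  obtain ⟨e, rfl⟩ := hdvd
  have : (a + k - 1) / k < e + 1 := by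
    rw [Nat.div_lt_iff_lt_mul hk]
    have : (e + 1) * k = k * e + k := by ring
    omega
  exact Nat.mul_le_mul_left k (by omega)

lemma rDn_le (b k : ℕ) : rDn b k ≤ b := by
  unfold rDn; rw [mul_comm]; exact Nat.div_mul_le_self b k

lemma rDn_max {b k d : ℕ} (hk : 0 < k) (hdvd : k ∣ d) (hdb : d ≤ b) : d ≤ rDn b k := by
  obtain ⟨e, rfl⟩ := hdvd
  refine Nat.mul_le_mul_left k ?_
  rw [Nat.le_div_iff_mul_le hk, mul_comm]; exact hdb

lemma hub_lemma {a b : ℕ} (ha : 1 ≤ a) (hab : a ≤ b) :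
    ∃ ℓ, rUp a (2 ^ ℓ) = rDn b (2 ^ ℓ) ∧ 2 ^ ℓ ≤ b := by
  classical
  set P : ℕ → Prop := fun ℓ => rUp a (2 ^ ℓ) ≤ b with hP
  have hP0 : P 0 := by simpa [P, rUp] using hab
  set ℓ := Nat.findGreatest P b with hℓ
  have hPl : P ℓ := Nat.findGreatest_spec (Nat.zero_le b) hP0
  have key : ∀ k, 2 ^ k ∣ rUp a (2 ^ k) ∧ 2 ^ k ≤ rUp a (2 ^ k) := by
    intro k
    have hd := rUp_dvd a (2 ^ k)
    have hge := (rUp_spec a (2 ^ k) (Nat.two_pow_pos k)).1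
    exact ⟨hd, Nat.le_of_dvd (by omega) hd⟩
  have hnot : ¬ P (ℓ + 1) := by
    intro hp
    have h1 : 2 ^ (ℓ + 1) ≤ b := le_trans (key (ℓ + 1)).2 hp
    have h2 : ℓ + 1 < 2 ^ (ℓ + 1) := Nat.lt_two_pow_self
    exact Nat.findGreatest_is_greatest (Nat.lt_succ_self ℓ) (by omega) hp
  have hkpos : 0 < 2 ^ ℓ := Nat.two_pow_pos ℓ
  set c := rUp a (2 ^ ℓ) with hc
  have hca : a ≤ c := (rUp_spec a (2 ^ ℓ) hkpos).1
  have hcd : 2 ^ ℓ ∣ c := rUp_dvd a (2 ^ ℓ)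
  have hcrd : c ≤ rDn b (2 ^ ℓ) := rDn_max hkpos hcd hPl
  have hrdb : rDn b (2 ^ ℓ) ≤ b := rDn_le b (2 ^ ℓ)
  refine ⟨ℓ, ?_, le_trans (key ℓ).2 hPl⟩
  by_contra hne
  have hlt : c < rDn b (2 ^ ℓ) := lt_of_le_of_ne hcrd hne
  -- both are multiples of 2^ℓ, so rDn ≥ c + 2^ℓ
  obtain ⟨q, hq⟩ := hcd
  obtain ⟨e, he⟩ := rDn_dvd b (2 ^ ℓ)
  have hqe : q < e := by
    by_contra hge
    push_neg at hge
    have := Nat.mul_le_mul_left (2 ^ ℓ) hge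
    omega
  have hstep : c + 2 ^ ℓ ≤ rDn b (2 ^ ℓ) := by
    have : 2 ^ ℓ * (q + 1) ≤ 2 ^ ℓ * e := Nat.mul_le_mul_left _ (by omega)
    calc c + 2 ^ ℓ = 2 ^ ℓ * (q + 1) := by rw [hq]; ring
    _ ≤ 2 ^ ℓ * e := this
    _ = rDn b (2 ^ ℓ) := he.symm
  -- among q, q+1 one is even, giving a multiple of 2^(ℓ+1) in [a, b]
  have hd : ∃ d, 2 ^ (ℓ + 1) ∣ d ∧ a ≤ d ∧ d ≤ b := by
    rcases Nat.even_or_odd q with hev | hod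
    · obtain ⟨t, ht⟩ := hev
      exact ⟨c, ⟨t, by rw [hq, ht]; ring⟩, hca, hPl⟩
    · obtain ⟨t, ht⟩ := hod
      refine ⟨c + 2 ^ ℓ, ⟨t + 1, by rw [hq, ht]; ring⟩, by omega, by omega⟩
  obtain ⟨d, hdd, had, hdb⟩ := hd
  exact hnot (le_trans (rUp_min (Nat.two_pow_pos _) hdd had) hdb)

lemma path_rtg {V : Type} (E : V → V → Prop) {m : ℕ} (p : Fin m → V)
    (hpath : ∀ (i : ℕ) (h : i + 1 < m), E (p ⟨i, Nat.lt_of_succ_lt h⟩) (p ⟨i + 1, h⟩)) :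
    ∀ (d : ℕ) (i j : Fin m), (i : ℕ) + d = (j : ℕ) → Relation.ReflTransGen E (p i) (p j) := by
  intro d
  induction d with
  | zero =>
    intro i j h
    have : i = j := Fin.ext (by omega)
    rw [this]
  | succ d ih =>
    intro i j h
    have hjm : (j : ℕ) < m := j.isLt
    have hlt : (i : ℕ) + d + 1 < m := by omega
    have h1 := ih i ⟨(i : ℕ) + d, by omega⟩ rfl
    have h2 := hpath ((i : ℕ) + d) hlt
    have hj : j = ⟨(i : ℕ) + d + 1, hlt⟩ := Fin.ext (by simp; omega)
    rw [hj]
    exact Relation.ReflTransGen.tail h1 h2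

/-- If a digraph `G` on `n` vertices contains a directed path `P = (p 0, …, p (m-1))`, then
there is a set `S` of at most `2n(⌊log₂ m⌋ + 2)` transitive-closure edges of `G` such that
every pair `(u,v)` joined in `G` by a directed path meeting `P` is joined in `G ∪ S` by a
directed path of length at most `2`. -/
theorem stmt10 {V : Type} [Fintype V] (E : V → V → Prop)
    (n : ℕ) (hn : n = Fintype.card V)
    (m : ℕ) (hm : 1 ≤ m) (p : Fin m → V) (hinj : Function.Injective p)
    (hpath : ∀ (i : ℕ) (h : i + 1 < m), E (p ⟨i, Nat.lt_of_succ_lt h⟩) (p ⟨i + 1, h⟩)) :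
    ∃ S : Set (V × V), S.ncard ≤ 2 * n * (Nat.log 2 m + 2) ∧
      (∀ e ∈ S, e.1 ≠ e.2 ∧ Relation.TransGen E e.1 e.2) ∧
      ∀ u v : V,
        (∃ i : Fin m, Relation.ReflTransGen E u (p i) ∧ Relation.ReflTransGen E (p i) v) →
        distLE (fun a b => E a b ∨ (a, b) ∈ S) 2 u v := by
  classical
  set L := Nat.log 2 m with hL
  set aF : V → ℕ := fun u =>
    sInf {k : ℕ | ∃ h : k < m, Relation.ReflTransGen E u (p ⟨k, h⟩)} + 1 with haF
  set bF : V → ℕ := fun v =>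
    sSup {k : ℕ | ∃ h : k < m, Relation.ReflTransGen E (p ⟨k, h⟩) v} + 1 with hbF
  set f : V × Fin (L + 1) → V × V := fun x =>
    (x.1, if h : rUp (aF x.1) (2 ^ (x.2 : ℕ)) - 1 < m
      then p ⟨rUp (aF x.1) (2 ^ (x.2 : ℕ)) - 1, h⟩ else x.1) with hf
  set g : V × Fin (L + 1) → V × V := fun x =>
    (if h : rDn (bF x.1) (2 ^ (x.2 : ℕ)) - 1 < m
      then p ⟨rDn (bF x.1) (2 ^ (x.2 : ℕ)) - 1, h⟩ else x.1, x.1) with hg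
  set S : Set (V × V) :=
    (Set.range f ∪ Set.range g) ∩ {e | e.1 ≠ e.2 ∧ Relation.TransGen E e.1 e.2} with hS
  have hrange : ∀ F : V × Fin (L + 1) → V × V, (Set.range F).ncard ≤ n * (L + 1) := by
    intro F
    have h1 : (Set.range F).ncard ≤ (Set.univ : Set (V × Fin (L + 1))).ncard := by
      rw [← Set.image_univ]
      exact Set.ncard_image_le (Set.toFinite _)
    rw [Set.ncard_univ, Nat.card_eq_fintype_card, Fintype.card_prod, Fintype.card_fin] at h1
    rw [hn]; exact h1
  refine ⟨S, ?_, ?_, ?_⟩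
  · -- cardinality bound
    calc S.ncard ≤ (Set.range f ∪ Set.range g).ncard :=
          Set.ncard_le_ncard Set.inter_subset_left (Set.toFinite _)
      _ ≤ (Set.range f).ncard + (Set.range g).ncard := Set.ncard_union_le _ _
      _ ≤ n * (L + 1) + n * (L + 1) := Nat.add_le_add (hrange f) (hrange g)
      _ ≤ 2 * n * (L + 2) := by ring_nf; nlinarith
  · intro e he
    exact he.2
  · rintro u v ⟨i, hui, hiv⟩
    have hiA : (i : ℕ) ∈ {k : ℕ | ∃ h : k < m, Relation.ReflTransGen E u (p ⟨k, h⟩)} :=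
      ⟨i.isLt, by convert hui using 2⟩
    have hiB : (i : ℕ) ∈ {k : ℕ | ∃ h : k < m, Relation.ReflTransGen E (p ⟨k, h⟩) v} :=
      ⟨i.isLt, by convert hiv using 3⟩
    have hamem : aF u - 1 ∈ {k : ℕ | ∃ h : k < m, Relation.ReflTransGen E u (p ⟨k, h⟩)} := by
      simp only [haF, Nat.add_sub_cancel]
      exact Nat.sInf_mem ⟨_, hiA⟩
    have hbdd : BddAbove {k : ℕ | ∃ h : k < m, Relation.ReflTransGen E (p ⟨k, h⟩) v} :=
      ⟨m, fun x hx => le_of_lt hx.1⟩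
    have hbmem : bF v - 1 ∈ {k : ℕ | ∃ h : k < m, Relation.ReflTransGen E (p ⟨k, h⟩) v} := by
      simp only [hbF, Nat.add_sub_cancel]
      exact Nat.sSup_mem ⟨_, hiB⟩ hbdd
    have ha1 : 1 ≤ aF u := by simp [haF]
    have hb1 : 1 ≤ bF v := by simp [hbF]
    have hale : aF u ≤ (i : ℕ) + 1 := by
      simp only [haF]
      exact Nat.add_le_add_right (Nat.sInf_le hiA) 1
    have hble : (i : ℕ) + 1 ≤ bF v := by
      simp only [hbF]
      exact Nat.add_le_add_right (le_csSup hbdd hiB) 1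
    have hbm : bF v ≤ m := by
      obtain ⟨hlt, -⟩ := hbmem
      omega
    obtain ⟨ℓ, heq, hpow⟩ := hub_lemma (a := aF u) (b := bF v) ha1 (by omega)
    set c := rUp (aF u) (2 ^ ℓ) with hc
    have hca : aF u ≤ c := (rUp_spec (aF u) (2 ^ ℓ) (Nat.two_pow_pos ℓ)).1
    have hcb : c ≤ bF v := by rw [heq]; exact rDn_le _ _
    have hcm : c - 1 < m := by omega
    have hℓL : ℓ ≤ L := by
      rw [hL]
      exact (Nat.le_log_iff_pow_le (by norm_num) (by omega)).mpr (le_trans hpow hbm)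
    set w := p ⟨c - 1, hcm⟩ with hw
    have hru : Relation.ReflTransGen E u w := by
      obtain ⟨hlt, hmin⟩ := hamem
      exact hmin.trans (path_rtg E p hpath (c - aF u) ⟨aF u - 1, hlt⟩ ⟨c - 1, hcm⟩ (by show aF u - 1 + (c - aF u) = c - 1; omega))
    have hrv : Relation.ReflTransGen E w v := by
      obtain ⟨hlt, hmax⟩ := hbmem
      exact (path_rtg E p hpath (bF v - c) ⟨c - 1, hcm⟩ ⟨bF v - 1, hlt⟩ (by show c - 1 + (bF v - c) = bF v - 1; omega)).trans hmax
    have hmem1 : u ≠ w → (u, w) ∈ S := by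
      intro hne
      refine ⟨Or.inl ⟨(u, ⟨ℓ, by omega⟩), ?_⟩, hne, ?_⟩
      · simp only [hf]
        rw [dif_pos hcm]
      · rcases (Relation.reflTransGen_iff_eq_or_transGen.mp hru) with h | h
        · exact absurd h.symm hne
        · exact h
    have hmem2 : w ≠ v → (w, v) ∈ S := by
      intro hne
      refine ⟨Or.inr ⟨(v, ⟨ℓ, by omega⟩), ?_⟩, hne, ?_⟩
      · have hcond : rDn (bF v) (2 ^ ℓ) - 1 < m := by rw [← heq]; exact hcm
        have hfin : (⟨rDn (bF v) (2 ^ ℓ) - 1, hcond⟩ : Fin m) = ⟨c - 1, hcm⟩ :=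
          Fin.ext (by simp only [← heq])
        simp only [hg]
        rw [dif_pos hcond, hfin]
      · rcases (Relation.reflTransGen_iff_eq_or_transGen.mp hrv) with h | h
        · exact absurd h.symm hne
        · exact h
    simp only [distLE]
    by_cases h1 : u = w
    · by_cases h2 : w = v
      · exact Or.inl (h1.trans h2)
      · exact Or.inr ⟨v, Or.inr (h1 ▸ hmem2 h2), Or.inl rfl⟩
    · by_cases h2 : w = v
      · exact Or.inr ⟨w, Or.inr (hmem1 h1), Or.inl h2⟩
      · exact Or.inr ⟨w, Or.inr (hmem1 h1), Or.inr ⟨v, Or.inr (hmem2 h2), rfl⟩⟩
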